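/- Let G_1 be an r_1-regular graph with n_1 vertices v_1,…,v_{n_1} and m_1 edges, and let G_2 be an arbitrary graph with n_2 vertices. Write R = R(G_1) for the incidence matrix of G_1, let λ_1(G_1) ≥ … ≥ λ_{n_1}(G_1) be the adjacency eigenvalues of G_1 listed with multiplicity, and write Γ = Γ_{A(G_2)}(x). Then for every real number x ≠ −2 such that xI_{n_2} − A(G_2) and (x+2)I_{m_1} − (1+Γ)RᵀR are invertible: det(xI − A(G_1 ⊡_T G_2)) = det(xI_{n_2} − A(G_2))^{n_1} · (x+2)^{m_1−n_1} · ∏_{i=1}^{n_1} [ (x+2) − (1+Γ)(λ_i(G_1)+r_1) ] · det( xI_{n_1} − A(G_1) − Γ·A(G_1)² − (I_{n_1}+Γ·A(G_1)) R ((x+2)I_{m_1} − (1+Γ)RᵀR)⁻¹ Rᵀ (I_{n_1}+Γ·A(G_1)) ). -/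

import Mathlib

open Finset Matrix Polynomial

/-- The vertex-edge incidence matrix `R(G)` of a graph `G`: rows indexed by vertices,
columns indexed by edges, with entry `1` exactly when the vertex is incident with the edge. -/
def incMat {V : Type*} [DecidableEq V] (G : SimpleGraph V) : Matrix V G.edgeSet ℝ :=
  Matrix.of fun v e => if v ∈ (e : Sym2 V) then (1 : ℝ) else 0

/-- The `M`-coronal `Γ_M(x)`: the sum of all entries of `(xI - M)⁻¹`. -/
noncomputable def coronal {n : Type*} [Fintype n] [DecidableEq n]
    (M : Matrix n n ℝ) (x : ℝ) : ℝ :=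
  ∑ i, ∑ j, (x • (1 : Matrix n n ℝ) - M)⁻¹ i j

/-- The T-vertex neighbourhood corona `G₁ ⊡_T G₂`: the disjoint union of the T-graph
`T(G₁)` (on `V₁ ⊕ E(G₁)`) and one copy of `G₂` for each vertex of `G₁`, where every
vertex of the `i`-th copy of `G₂` is joined to every neighbour of `vᵢ` in `T(G₁)`,
i.e. to every vertex of `G₁` adjacent to `vᵢ` and to every edge of `G₁` incident with `vᵢ`. -/
def tVertexCorona {V₁ V₂ : Type*} (G₁ : SimpleGraph V₁) (G₂ : SimpleGraph V₂) :
    SimpleGraph (V₁ ⊕ (G₁.edgeSet ⊕ V₁ × V₂)) :=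
  SimpleGraph.fromRel fun a b =>
    match a, b with
    | Sum.inl u, Sum.inl v => G₁.Adj u v
    | Sum.inl u, Sum.inr (Sum.inl e) => u ∈ (e : Sym2 V₁)
    | Sum.inl u, Sum.inr (Sum.inr iw) => G₁.Adj u iw.1
    | Sum.inr (Sum.inl e), Sum.inr (Sum.inl f) => ∃ v, v ∈ (e : Sym2 V₁) ∧ v ∈ (f : Sym2 V₁)
    | Sum.inr (Sum.inl e), Sum.inr (Sum.inr iw) => iw.1 ∈ (e : Sym2 V₁)
    | Sum.inr (Sum.inr iw), Sum.inr (Sum.inr jw) => iw.1 = jw.1 ∧ G₂.Adj iw.2 jw.2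
    | _, _ => False

/-- The T-edge neighbourhood corona `G₁ ⊟_T G₂`: the disjoint union of the T-graph
`T(G₁)` (on `V₁ ⊕ E(G₁)`) and one copy of `G₂` for each edge of `G₁`, where every
vertex of the `i`-th copy of `G₂` is joined to the two endpoints of the edge `eᵢ`
(as vertices of `G₁` inside `T(G₁)`). -/
def tEdgeCorona {V₁ V₂ : Type*} (G₁ : SimpleGraph V₁) (G₂ : SimpleGraph V₂) :
    SimpleGraph (V₁ ⊕ (G₁.edgeSet ⊕ G₁.edgeSet × V₂)) :=
  SimpleGraph.fromRel fun a b =>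
    match a, b with
    | Sum.inl u, Sum.inl v => G₁.Adj u v
    | Sum.inl u, Sum.inr (Sum.inl e) => u ∈ (e : Sym2 V₁)
    | Sum.inl u, Sum.inr (Sum.inr ew) => u ∈ (ew.1 : Sym2 V₁)
    | Sum.inr (Sum.inl e), Sum.inr (Sum.inl f) => ∃ v, v ∈ (e : Sym2 V₁) ∧ v ∈ (f : Sym2 V₁)
    | Sum.inr (Sum.inr ew), Sum.inr (Sum.inr fw) => ew.1 = fw.1 ∧ G₂.Adj ew.2 fw.2
    | _, _ => False

noncomputable instance {V₁ V₂ : Type*} (G₁ : SimpleGraph V₁) (G₂ : SimpleGraph V₂) :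
    DecidableRel (tVertexCorona G₁ G₂).Adj := Classical.decRel _

noncomputable instance {V₁ V₂ : Type*} (G₁ : SimpleGraph V₁) (G₂ : SimpleGraph V₂) :
    DecidableRel (tEdgeCorona G₁ G₂).Adj := Classical.decRel _

noncomputable instance {V : Type*} (G : SimpleGraph V) :
    DecidableRel (G.lineGraph).Adj := Classical.decRel _


section AuxTVC

open Finset Matrix

theorem aux_det_smul_sub {V : Type*} [Fintype V] [DecidableEq V] (A : Matrix V V ℝ)
    (lam : Fin (Fintype.card V) → ℝ)
    (hfac : ∀ y : ℝ, Matrix.det (y • (1 : Matrix V V ℝ) - A) = ∏ i, (y - lam i))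
    (s t : ℝ) : Matrix.det (s • (1 : Matrix V V ℝ) - t • A) = ∏ i, (s - t * lam i) := by
  rcases eq_or_ne t 0 with rfl | ht
  · simp [det_smul, Finset.prod_const, Finset.card_univ]
  · have h : s • (1 : Matrix V V ℝ) - t • A = t • ((s/t) • (1 : Matrix V V ℝ) - A) := by
      rw [smul_sub, smul_smul]; field_simp
    have hp : t ^ Fintype.card V = ∏ _i : Fin (Fintype.card V), t := by simp
    rw [h, det_smul, hfac, hp, ← Finset.prod_mul_distrib]
    exact Finset.prod_congr rfl fun i _ => by field_simp [mul_comm]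

section Blockish
variable {V₁ V₂ : Type*} [Fintype V₁] [DecidableEq V₁] [Fintype V₂] [DecidableEq V₂]

theorem blockish_mul (M N : Matrix V₂ V₂ ℝ) :
    (Matrix.of fun p q : V₁ × V₂ => if p.1 = q.1 then M p.2 q.2 else 0) *
      (Matrix.of fun p q : V₁ × V₂ => if p.1 = q.1 then N p.2 q.2 else 0) =
    Matrix.of fun p q : V₁ × V₂ => if p.1 = q.1 then (M * N) p.2 q.2 else 0 := by
  ext p q
  rw [mul_apply, Fintype.sum_prod_type]
  rw [Finset.sum_eq_single p.1 (fun k _ hk => by simp [Ne.symm hk]) (by simp)]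
  by_cases h : p.1 = q.1 <;> simp [h, mul_apply]

theorem blockish_one :
    (Matrix.of fun p q : V₁ × V₂ => if p.1 = q.1 then (1 : Matrix V₂ V₂ ℝ) p.2 q.2 else 0) = 1 := by
  ext p q
  by_cases h : p.1 = q.1 <;> simp [Matrix.one_apply, Prod.ext_iff, h]

theorem blockish_det (M : Matrix V₂ V₂ ℝ) :
    (Matrix.of fun p q : V₁ × V₂ => if p.1 = q.1 then M p.2 q.2 else 0).det
      = M.det ^ Fintype.card V₁ := by
  have h : (Matrix.of fun p q : V₁ × V₂ => if p.1 = q.1 then M p.2 q.2 else 0)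
      = Matrix.reindex (Equiv.prodComm V₂ V₁) (Equiv.prodComm V₂ V₁)
        (Matrix.blockDiagonal fun _ : V₁ => M) := by
    ext p q
    by_cases h : p.1 = q.1 <;>
      simp [Matrix.blockDiagonal_apply, h, eq_comm]
  rw [h, Matrix.det_reindex_self, Matrix.det_blockDiagonal, Finset.prod_const, Finset.card_univ]

theorem aux_mid (Q : Matrix V₂ V₂ ℝ) (β γ : V₁ → ℝ) :
    ∑ q : V₁ × V₂, (∑ p : V₁ × V₂, β p.1 * (if p.1 = q.1 then Q p.2 q.2 else 0)) * γ q.1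
      = (∑ w, ∑ w', Q w w') * ∑ j, β j * γ j := by
  have inner : ∀ (j : V₁) (w' : V₂),
      (∑ p : V₁ × V₂, β p.1 * (if p.1 = j then Q p.2 w' else 0)) = β j * ∑ w, Q w w' := by
    intro j w'
    rw [Fintype.sum_prod_type]
    rw [Finset.sum_eq_single j (fun k _ hk => by simp [hk]) (by simp)]
    simp [Finset.mul_sum]
  rw [Fintype.sum_prod_type]
  have hstep : ∀ j : V₁, ∑ w' : V₂,
      (∑ p : V₁ × V₂, β p.1 * (if p.1 = j then Q p.2 w' else 0)) * γ j
      = (β j * γ j) * ∑ w, ∑ w', Q w w' := by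
    intro j
    rw [Finset.sum_congr rfl (fun w' _ => by rw [inner j w'])]
    rw [← Finset.sum_mul, ← Finset.mul_sum, Finset.sum_comm]
    ring
  rw [Finset.sum_congr rfl (fun j _ => hstep j), ← Finset.sum_mul]
  ring

theorem fromBlocks_sub' {l m n o : Type*} (A A' : Matrix n l ℝ) (B B' : Matrix n m ℝ)
    (C C' : Matrix o l ℝ) (D D' : Matrix o m ℝ) :
    Matrix.fromBlocks A B C D - Matrix.fromBlocks A' B' C' D' =
      Matrix.fromBlocks (A - A') (B - B') (C - C') (D - D') := by
  simp only [sub_eq_add_neg, ← Matrix.fromBlocks_neg, ← Matrix.fromBlocks_add]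

end Blockish

section IncAux
set_option linter.unusedSectionVars false
variable {V₁ : Type*} [Fintype V₁] [DecidableEq V₁] (G₁ : SimpleGraph V₁) [DecidableRel G₁.Adj]

theorem incMat_eq_incMatrix (u : V₁) (e : G₁.edgeSet) :
    incMat G₁ u e = G₁.incMatrix ℝ u ↑e := by
  rw [SimpleGraph.incMatrix_apply', incMat]
  simp [SimpleGraph.incidenceSet, e.2]

theorem sum_edgeSet (g : Sym2 V₁ → ℝ) (h0 : ∀ e, e ∉ G₁.edgeSet → g e = 0) :
    ∑ e : G₁.edgeSet, g ↑e = ∑ e : Sym2 V₁, g e := by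
  rw [← Finset.sum_subtype (G₁.edgeFinset) (fun x => by simp) g]
  exact Finset.sum_subset (Finset.subset_univ _)
    (fun e _ he => h0 e (by simpa [SimpleGraph.mem_edgeFinset] using he))

theorem incMat_mul_transpose (r₁ : ℕ) (hreg : G₁.IsRegularOfDegree r₁) :
    incMat G₁ * (incMat G₁)ᵀ = G₁.adjMatrix ℝ + (r₁ : ℝ) • 1 := by
  ext u v
  rw [mul_apply]
  have h1 : ∀ e : G₁.edgeSet, incMat G₁ u e * (incMat G₁)ᵀ e v
      = G₁.incMatrix ℝ u ↑e * G₁.incMatrix ℝ v ↑e := by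
    intro e; rw [transpose_apply, incMat_eq_incMatrix, incMat_eq_incMatrix]
  rw [Finset.sum_congr rfl (fun e _ => h1 e),
    sum_edgeSet G₁ (fun e => G₁.incMatrix ℝ u e * G₁.incMatrix ℝ v e)
      (fun e he => by
        rw [G₁.incMatrix_of_notMem_incidenceSet (fun h => he h.1), zero_mul])]
  have h2 := congrFun (congrFun (G₁.incMatrix_mul_transpose (R := ℝ)) u) v
  rw [mul_apply] at h2
  simp only [transpose_apply] at h2 ⊢
  rw [h2, Matrix.of_apply, hreg u]
  by_cases h : u = v
  · subst h; simp [Matrix.one_apply, G₁.irrefl]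
  · simp [h, Matrix.one_apply, SimpleGraph.adjMatrix]

theorem incMat_transpose_mul (e f : G₁.edgeSet) :
    ((incMat G₁)ᵀ * incMat G₁) e f =
      if e = f then 2 else if ∃ v, v ∈ (e : Sym2 V₁) ∧ v ∈ (f : Sym2 V₁) then 1 else 0 := by
  rw [mul_apply]
  have h1 : ∀ u, (incMat G₁)ᵀ e u * incMat G₁ u f
      = if u ∈ (e : Sym2 V₁) ∧ u ∈ (f : Sym2 V₁) then (1:ℝ) else 0 := by
    intro u
    simp only [transpose_apply, incMat, of_apply]
    split_ifs with h h2 h3 h4 <;> simp_all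
  rw [Finset.sum_congr rfl (fun u _ => h1 u), Finset.sum_boole]
  split_ifs with h h2
  · subst h
    obtain ⟨E, hE⟩ := e
    induction E using Sym2.ind with
    | _ a b =>
      have hab : a ≠ b := (G₁.mem_edgeSet.mp hE).ne
      have hset : Finset.filter (fun u => u ∈ s(a,b) ∧ u ∈ s(a,b)) Finset.univ = {a, b} := by
        ext u; simp [Sym2.mem_iff, and_self]
      rw [hset, Finset.card_insert_of_notMem (by simpa using hab), Finset.card_singleton]
      norm_num
  · have hs : ∀ u v, u ∈ Finset.filter (fun u => u ∈ (e:Sym2 V₁) ∧ u ∈ (f:Sym2 V₁)) Finset.univ →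
        v ∈ Finset.filter (fun u => u ∈ (e:Sym2 V₁) ∧ u ∈ (f:Sym2 V₁)) Finset.univ → u = v := by
      intro u v hu hv
      simp only [Finset.mem_filter, Finset.mem_univ, true_and] at hu hv
      by_contra hne
      have he' : (e:Sym2 V₁) = s(u,v) := (Sym2.mem_and_mem_iff hne).mp ⟨hu.1, hv.1⟩
      have hf' : (f:Sym2 V₁) = s(u,v) := (Sym2.mem_and_mem_iff hne).mp ⟨hu.2, hv.2⟩
      exact h (Subtype.ext (he'.trans hf'.symm))
    obtain ⟨v, hv1, hv2⟩ := h2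
    have hmem : v ∈ Finset.filter (fun u => u ∈ (e:Sym2 V₁) ∧ u ∈ (f:Sym2 V₁)) Finset.univ := by
      simp [hv1, hv2]
    have hset : Finset.filter (fun u => u ∈ (e:Sym2 V₁) ∧ u ∈ (f:Sym2 V₁)) Finset.univ = {v} :=
      Finset.eq_singleton_iff_unique_mem.mpr ⟨hmem, fun x hx => hs x v hx hmem⟩
    rw [hset]; norm_num
  · have hset : Finset.filter (fun u => u ∈ (e:Sym2 V₁) ∧ u ∈ (f:Sym2 V₁)) Finset.univ = ∅ := by
      ext u
      simp only [Finset.mem_filter, Finset.mem_univ, true_and, Finset.notMem_empty, iff_false]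
      exact fun hu => h2 ⟨u, hu⟩
    rw [hset]; norm_num

theorem detS22 (r₁ : ℕ) (hreg : G₁.IsRegularOfDegree r₁)
    (lam : Fin (Fintype.card V₁) → ℝ)
    (hfac : ∀ y : ℝ,
      Matrix.det (y • (1 : Matrix V₁ V₁ ℝ) - G₁.adjMatrix ℝ) = ∏ i, (y - lam i))
    (a c : ℝ) (ha : a ≠ 0) :
    Matrix.det (a • (1 : Matrix G₁.edgeSet G₁.edgeSet ℝ) - c • ((incMat G₁)ᵀ * incMat G₁)) =
      a ^ ((Fintype.card G₁.edgeSet : ℤ) - (Fintype.card V₁ : ℤ)) *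
        ∏ i, (a - c * (lam i + (r₁ : ℝ))) := by
  have h1 : a • (1 : Matrix G₁.edgeSet G₁.edgeSet ℝ) - c • ((incMat G₁)ᵀ * incMat G₁)
      = a • (1 + (incMat G₁)ᵀ * ((-(c/a)) • incMat G₁)) := by
    rw [Matrix.mul_smul, smul_add, smul_smul]
    rw [show a * -(c / a) = -c by field_simp]
    rw [neg_smul, ← sub_eq_add_neg]
  rw [h1, det_smul, det_one_add_mul_comm]
  have h2 : (1 : Matrix V₁ V₁ ℝ) + ((-(c/a)) • incMat G₁) * (incMat G₁)ᵀ
      = a⁻¹ • (a • (1 : Matrix V₁ V₁ ℝ) - c • (incMat G₁ * (incMat G₁)ᵀ)) := by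
    rw [Matrix.smul_mul, smul_sub, smul_smul, smul_smul, inv_mul_cancel₀ ha, one_smul]
    rw [show a⁻¹ * c = c / a by field_simp, neg_smul, ← sub_eq_add_neg]
  rw [h2, det_smul, incMat_mul_transpose G₁ r₁ hreg]
  have h3 : a • (1 : Matrix V₁ V₁ ℝ) - c • (G₁.adjMatrix ℝ + (r₁ : ℝ) • 1)
      = (a - c * r₁) • (1 : Matrix V₁ V₁ ℝ) - c • G₁.adjMatrix ℝ := by
    rw [smul_add, smul_smul, sub_smul, sub_sub]
    abel
  rw [h3, aux_det_smul_sub _ lam hfac]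
  rw [Finset.prod_congr rfl (fun i _ => show a - c * r₁ - c * lam i = a - c * (lam i + r₁) by ring)]
  rw [zpow_sub₀ ha, zpow_natCast, zpow_natCast]
  field_simp
  rw [mul_comm, ← mul_assoc, ← mul_pow, mul_one_div_cancel ha, one_pow, one_mul]

end IncAux

section CoronaBlocks
set_option linter.unusedSectionVars false
variable {V₁ V₂ : Type*} [Fintype V₁] [DecidableEq V₁] [Fintype V₂] [DecidableEq V₂]
  (G₁ : SimpleGraph V₁) (G₂ : SimpleGraph V₂) [DecidableRel G₁.Adj] [DecidableRel G₂.Adj]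

noncomputable def Kmat (x : ℝ) : Matrix (V₁ ⊕ G₁.edgeSet) (V₁ ⊕ G₁.edgeSet) ℝ :=
  Matrix.fromBlocks (x • (1 : Matrix V₁ V₁ ℝ) - G₁.adjMatrix ℝ) (-(incMat G₁))
    (-(incMat G₁)ᵀ) ((x + 2) • (1 : Matrix G₁.edgeSet G₁.edgeSet ℝ) - (incMat G₁)ᵀ * incMat G₁)

noncomputable def Bmat : Matrix (V₁ ⊕ G₁.edgeSet) (V₁ × V₂) ℝ :=
  Matrix.of fun a p => Sum.elim (fun u => -(G₁.adjMatrix ℝ u p.1)) (fun e => -(incMat G₁ p.1 e)) a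

noncomputable def Cmat : Matrix (V₁ × V₂) (V₁ ⊕ G₁.edgeSet) ℝ :=
  Matrix.of fun p a => Sum.elim (fun u => -(G₁.adjMatrix ℝ u p.1)) (fun e => -(incMat G₁ p.1 e)) a

noncomputable def Dmat (x : ℝ) : Matrix (V₁ × V₂) (V₁ × V₂) ℝ :=
  Matrix.of fun p q => if p.1 = q.1 then (x • (1 : Matrix V₂ V₂ ℝ) - G₂.adjMatrix ℝ) p.2 q.2 else 0

theorem corona_block (x : ℝ) :
    (x • (1 : Matrix (V₁ ⊕ (G₁.edgeSet ⊕ V₁ × V₂)) (V₁ ⊕ (G₁.edgeSet ⊕ V₁ × V₂)) ℝ)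
        - (tVertexCorona G₁ G₂).adjMatrix ℝ).submatrix
      (Equiv.sumAssoc V₁ G₁.edgeSet (V₁ × V₂)) (Equiv.sumAssoc V₁ G₁.edgeSet (V₁ × V₂)) =
    Matrix.fromBlocks (Kmat G₁ x) (Bmat G₁ (V₂ := V₂)) (Cmat G₁ (V₂ := V₂)) (Dmat G₂ x (V₁ := V₁)) := by
  have hRTR := incMat_transpose_mul G₁
  ext a b
  rw [Matrix.submatrix_apply, Matrix.sub_apply, SimpleGraph.adjMatrix_apply]
  rcases a with (u | e) | p <;> rcases b with (v | f) | q <;>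
    simp only [Matrix.submatrix_apply, Equiv.sumAssoc, Equiv.coe_fn_mk, Matrix.sub_apply,
      Matrix.smul_apply, Matrix.one_apply, SimpleGraph.adjMatrix_apply, tVertexCorona,
      SimpleGraph.fromRel_adj, Matrix.fromBlocks_apply₁₁, Matrix.fromBlocks_apply₁₂,
      Matrix.fromBlocks_apply₂₁, Matrix.fromBlocks_apply₂₂, Kmat, Bmat, Cmat, Dmat,
      Matrix.of_apply, Sum.elim_inl, Sum.elim_inr, smul_eq_mul]
  · -- V V
    by_cases h : G₁.Adj u v
    · have h' : G₁.Adj v u := h.symm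
      simp [h, h', h.ne]
    · have h' : ¬ G₁.Adj v u := fun hh => h hh.symm
      simp [h, h']
  · -- V E
    simp [incMat, Sum.inl.injEq, reduceCtorEq]
  · -- V P
    by_cases h : G₁.Adj u q.1
    · simp [h, h.symm]
    · simp [h, fun hh : G₁.Adj q.1 u => h hh.symm]
  · -- E V
    simp [incMat, reduceCtorEq]
  · -- E E
    rw [hRTR]
    by_cases h : e = f
    · subst h; simp
    · have hsym : ((∃ v ∈ (e : Sym2 V₁), v ∈ (f : Sym2 V₁)) ∨
          (∃ v ∈ (f : Sym2 V₁), v ∈ (e : Sym2 V₁))) ↔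
          (∃ v ∈ (e : Sym2 V₁), v ∈ (f : Sym2 V₁)) := by
        constructor
        · rintro (hh | ⟨v, h1, h2⟩)
          · exact hh
          · exact ⟨v, h2, h1⟩
        · exact Or.inl
      simp [h, hsym]
  · -- E P
    simp [incMat, reduceCtorEq]
  · -- P V
    by_cases h : G₁.Adj v p.1
    · simp [h, h.symm]
    · simp [h, fun hh : G₁.Adj p.1 v => h hh.symm]
  · -- P E
    simp [incMat, reduceCtorEq]
  · -- P P
    rcases p with ⟨i, w⟩; rcases q with ⟨j, w'⟩
    by_cases h : i = j
    · subst h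
      by_cases h2 : G₂.Adj w w'
      · have hne := h2.ne
        simp [h2, h2.symm, Prod.ext_iff, hne]
      · have h2' : ¬ G₂.Adj w' w := fun hh => h2 hh.symm
        simp [h2, h2', Prod.ext_iff]
    · have h' : ¬ (j = i) := fun hh => h hh.symm
      simp [h, h', Prod.ext_iff]

end CoronaBlocks

end AuxTVC

/-- The adjacency characteristic polynomial of the T-vertex neighbourhood corona
`G₁ ⊡_T G₂` of an `r₁`-regular graph `G₁` and an arbitrary graph `G₂`
(Theorem on the A-spectrum of the T-vertex neighbourhood corona). -/
theorem adj_charpoly_tVertexCorona {V₁ V₂ : Type*} [Fintype V₁] [DecidableEq V₁]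
    [Fintype V₂] [DecidableEq V₂]
    (G₁ : SimpleGraph V₁) (G₂ : SimpleGraph V₂)
    [DecidableRel G₁.Adj] [DecidableRel G₂.Adj]
    (r₁ : ℕ) (hreg : G₁.IsRegularOfDegree r₁)
    -- the adjacency eigenvalues of `G₁`, listed with multiplicity in decreasing order
    (lam : Fin (Fintype.card V₁) → ℝ) (hdec : Antitone lam)
    (hfac : ∀ y : ℝ,
      Matrix.det (y • (1 : Matrix V₁ V₁ ℝ) - G₁.adjMatrix ℝ) = ∏ i, (y - lam i))
    (x Γ : ℝ) (hΓ : Γ = coronal (G₂.adjMatrix ℝ) x) (hx : x ≠ -2)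
    (h1 : IsUnit (x • (1 : Matrix V₂ V₂ ℝ) - G₂.adjMatrix ℝ))
    (h2 : IsUnit ((x + 2) • (1 : Matrix G₁.edgeSet G₁.edgeSet ℝ) -
        (1 + Γ) • ((incMat G₁)ᵀ * incMat G₁))) :
    Matrix.det (x • (1 : Matrix _ _ ℝ) - (tVertexCorona G₁ G₂).adjMatrix ℝ) =
      Matrix.det (x • (1 : Matrix V₂ V₂ ℝ) - G₂.adjMatrix ℝ) ^ Fintype.card V₁ *
      (x + 2) ^ ((Fintype.card G₁.edgeSet : ℤ) - (Fintype.card V₁ : ℤ)) *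
      (∏ i, ((x + 2) - (1 + Γ) * (lam i + (r₁ : ℝ)))) *
      Matrix.det (x • (1 : Matrix V₁ V₁ ℝ) - G₁.adjMatrix ℝ - Γ • (G₁.adjMatrix ℝ ^ 2) -
        (1 + Γ • G₁.adjMatrix ℝ) * incMat G₁ *
          ((x + 2) • (1 : Matrix G₁.edgeSet G₁.edgeSet ℝ) -
            (1 + Γ) • ((incMat G₁)ᵀ * incMat G₁))⁻¹ *
          (incMat G₁)ᵀ * (1 + Γ • G₁.adjMatrix ℝ)) := by
  classical
  have ha : x + 2 ≠ 0 := by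
    intro h; exact hx (by linarith)
  have hdet2 : IsUnit (Matrix.det (x • (1 : Matrix V₂ V₂ ℝ) - G₂.adjMatrix ℝ)) :=
    (Matrix.isUnit_iff_isUnit_det _).mp h1
  have hMQ : (x • (1 : Matrix V₂ V₂ ℝ) - G₂.adjMatrix ℝ) *
      (x • (1 : Matrix V₂ V₂ ℝ) - G₂.adjMatrix ℝ)⁻¹ = 1 := Matrix.mul_nonsing_inv _ hdet2
  have hQM : (x • (1 : Matrix V₂ V₂ ℝ) - G₂.adjMatrix ℝ)⁻¹ *
      (x • (1 : Matrix V₂ V₂ ℝ) - G₂.adjMatrix ℝ) = 1 := Matrix.nonsing_inv_mul _ hdet2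
  set D' : Matrix (V₁ × V₂) (V₁ × V₂) ℝ :=
    Matrix.of fun p q => if p.1 = q.1 then
      (x • (1 : Matrix V₂ V₂ ℝ) - G₂.adjMatrix ℝ)⁻¹ p.2 q.2 else 0 with hD'def
  have hDform : Dmat G₂ x (V₁ := V₁) = Matrix.of (fun p q : V₁ × V₂ =>
      if p.1 = q.1 then (x • (1 : Matrix V₂ V₂ ℝ) - G₂.adjMatrix ℝ) p.2 q.2 else 0) := rfl
  have hDD' : Dmat G₂ x (V₁ := V₁) * D' = 1 := by
    rw [hD'def, hDform, blockish_mul, hMQ, blockish_one]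
  have hD'D : D' * Dmat G₂ x (V₁ := V₁) = 1 := by
    rw [hD'def, hDform, blockish_mul, hQM, blockish_one]
  letI instD : Invertible (Dmat G₂ x (V₁ := V₁)) := ⟨D', hD'D, hDD'⟩
  have hinvOf : ⅟(Dmat G₂ x (V₁ := V₁)) = D' := rfl
  set bf : (V₁ ⊕ G₁.edgeSet) → V₁ → ℝ :=
    fun a k => Sum.elim (fun u => -(G₁.adjMatrix ℝ u k)) (fun e => -(incMat G₁ k e)) a with hbf
  have key : ∀ a c, (Bmat G₁ (V₂ := V₂) * D' * Cmat G₁ (V₂ := V₂)) a c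
      = Γ * ∑ j, bf a j * bf c j := by
    intro a c
    have hrow : ∀ q : V₁ × V₂, (Bmat G₁ (V₂ := V₂) * D') a q
        = ∑ p : V₁ × V₂, bf a p.1 *
            (if p.1 = q.1 then (x • (1 : Matrix V₂ V₂ ℝ) - G₂.adjMatrix ℝ)⁻¹ p.2 q.2 else 0) := by
      intro q; rw [mul_apply]; rfl
    rw [mul_apply]
    have hterm : ∀ q : V₁ × V₂, (Bmat G₁ (V₂ := V₂) * D') a q * Cmat G₁ (V₂ := V₂) q c
        = (∑ p : V₁ × V₂, bf a p.1 *
            (if p.1 = q.1 then (x • (1 : Matrix V₂ V₂ ℝ) - G₂.adjMatrix ℝ)⁻¹ p.2 q.2 else 0))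
          * bf c q.1 := by
      intro q; rw [hrow q]; rfl
    rw [Finset.sum_congr rfl (fun q _ => hterm q), aux_mid, hΓ, coronal]
  have hsymA : ∀ i j : V₁, G₁.adjMatrix ℝ i j = G₁.adjMatrix ℝ j i := fun i j => by
    simp [SimpleGraph.adjMatrix_apply, SimpleGraph.adj_comm]
  have hBDC : Bmat G₁ (V₂ := V₂) * D' * Cmat G₁ (V₂ := V₂)
      = Γ • Matrix.fromBlocks (G₁.adjMatrix ℝ * G₁.adjMatrix ℝ) (G₁.adjMatrix ℝ * incMat G₁)
          ((incMat G₁)ᵀ * G₁.adjMatrix ℝ) ((incMat G₁)ᵀ * incMat G₁) := by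
    ext a c
    rw [key a c]
    rcases a with u | e <;> rcases c with v | f <;>
      simp only [hbf, Sum.elim_inl, Sum.elim_inr, Matrix.smul_apply,
        Matrix.fromBlocks_apply₁₁, Matrix.fromBlocks_apply₁₂, Matrix.fromBlocks_apply₂₁,
        Matrix.fromBlocks_apply₂₂, smul_eq_mul, Matrix.mul_apply, Matrix.transpose_apply,
        neg_mul_neg]
    · exact congrArg (Γ * ·) (Finset.sum_congr rfl fun j _ => by rw [hsymA v j])
    · exact congrArg (Γ * ·) (Finset.sum_congr rfl fun j _ => by rw [hsymA v j])
  have hσ := Matrix.det_submatrix_equiv_self (Equiv.sumAssoc V₁ G₁.edgeSet (V₁ × V₂))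
    (x • (1 : Matrix (V₁ ⊕ (G₁.edgeSet ⊕ V₁ × V₂)) (V₁ ⊕ (G₁.edgeSet ⊕ V₁ × V₂)) ℝ)
      - (tVertexCorona G₁ G₂).adjMatrix ℝ)
  rw [← hσ, corona_block G₁ G₂ x, Matrix.det_fromBlocks₂₂]
  have hdetD : (Dmat G₂ x (V₁ := V₁)).det
      = (x • (1 : Matrix V₂ V₂ ℝ) - G₂.adjMatrix ℝ).det ^ Fintype.card V₁ :=
    blockish_det _
  have hKB : Kmat G₁ x - Bmat G₁ (V₂ := V₂) * ⅟(Dmat G₂ x (V₁ := V₁)) * Cmat G₁ (V₂ := V₂)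
      = Matrix.fromBlocks
          (x • (1 : Matrix V₁ V₁ ℝ) - G₁.adjMatrix ℝ - Γ • (G₁.adjMatrix ℝ ^ 2))
          (-((1 + Γ • G₁.adjMatrix ℝ) * incMat G₁))
          (-((incMat G₁)ᵀ * (1 + Γ • G₁.adjMatrix ℝ)))
          ((x + 2) • (1 : Matrix G₁.edgeSet G₁.edgeSet ℝ) -
            (1 + Γ) • ((incMat G₁)ᵀ * incMat G₁)) := by
    have e12 : -incMat G₁ - Γ • (G₁.adjMatrix ℝ * incMat G₁)
        = -((1 + Γ • G₁.adjMatrix ℝ) * incMat G₁) := by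
      rw [Matrix.add_mul, Matrix.one_mul, Matrix.smul_mul, neg_add, sub_eq_add_neg]
    have e21 : -(incMat G₁)ᵀ - Γ • ((incMat G₁)ᵀ * G₁.adjMatrix ℝ)
        = -((incMat G₁)ᵀ * (1 + Γ • G₁.adjMatrix ℝ)) := by
      rw [Matrix.mul_add, Matrix.mul_one, Matrix.mul_smul, neg_add, sub_eq_add_neg]
    have e22 : (x + 2) • (1 : Matrix G₁.edgeSet G₁.edgeSet ℝ) - (incMat G₁)ᵀ * incMat G₁
          - Γ • ((incMat G₁)ᵀ * incMat G₁)
        = (x + 2) • (1 : Matrix G₁.edgeSet G₁.edgeSet ℝ)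
          - (1 + Γ) • ((incMat G₁)ᵀ * incMat G₁) := by
      rw [sub_sub]
      congr 1
      rw [add_smul, one_smul]
    rw [hinvOf, hBDC, Kmat, Matrix.fromBlocks_smul, fromBlocks_sub', pow_two, e12, e21, e22]
  rw [hKB]
  letI instS : Invertible ((x + 2) • (1 : Matrix G₁.edgeSet G₁.edgeSet ℝ) -
      (1 + Γ) • ((incMat G₁)ᵀ * incMat G₁)) := h2.invertible
  rw [Matrix.det_fromBlocks₂₂, invOf_eq_nonsing_inv]
  have hS : (x • (1 : Matrix V₁ V₁ ℝ) - G₁.adjMatrix ℝ - Γ • (G₁.adjMatrix ℝ ^ 2))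
      - (-((1 + Γ • G₁.adjMatrix ℝ) * incMat G₁)) *
        ((x + 2) • (1 : Matrix G₁.edgeSet G₁.edgeSet ℝ) -
          (1 + Γ) • ((incMat G₁)ᵀ * incMat G₁))⁻¹ *
        (-((incMat G₁)ᵀ * (1 + Γ • G₁.adjMatrix ℝ)))
      = x • (1 : Matrix V₁ V₁ ℝ) - G₁.adjMatrix ℝ - Γ • (G₁.adjMatrix ℝ ^ 2) -
        (1 + Γ • G₁.adjMatrix ℝ) * incMat G₁ *
          ((x + 2) • (1 : Matrix G₁.edgeSet G₁.edgeSet ℝ) -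
            (1 + Γ) • ((incMat G₁)ᵀ * incMat G₁))⁻¹ *
          (incMat G₁)ᵀ * (1 + Γ • G₁.adjMatrix ℝ) := by
    simp only [Matrix.neg_mul, Matrix.mul_neg, neg_neg, Matrix.mul_assoc]
  rw [hS, detS22 G₁ r₁ hreg lam hfac (x + 2) (1 + Γ) ha, hdetD]
  ring
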